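/- arXiv:2303.01913 — 2 statements merged into one kernel-verified Lean document; each statement's English description precedes it below -/
import Mathlib

section
/- In the modified DFS on a finite directed acyclic graph (where a vertex u is pushed onto the stack only when the count of its already-popped in-neighbors equals its in-degree), every vertex is pushed onto the stack at most once. -/
/-- In-degree of `u` in the directed graph given by adjacency `adj`. -/
def inDeg {V : Type*} [Fintype V] [DecidableEq V] (adj : V → V → Bool) (u : V) : ℕ :=
  (Finset.univ.filter (fun w => adj w u = true)).card

/-- State of the modified DFS: the stack, the counters δ, the list of popped
vertices in pop order, and the total number of push operations so far. -/
structure DFSState (V : Type*) where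
  stack : List V
  count : V → ℕ
  popped : List V
  pushCount : ℕ

/-- Initial state: the start vertex `l0` is pushed, all counters are zero. -/
def initState {V : Type*} (l0 : V) : DFSState V :=
  ⟨[l0], fun _ => 0, [], 1⟩

/-- One step of the modified DFS: pop the top vertex `v` of the stack,
increment δ(u) for each out-neighbor `u` of `v`, and push (in some order)
exactly those out-neighbors whose counter thereby reaches their in-degree. -/
inductive DFSStep {V : Type*} [Fintype V] [DecidableEq V] (adj : V → V → Bool) :
    DFSState V → DFSState V → Prop
  | pop (s : DFSState V) (v : V) (rest pushes : List V)
      (hstack : s.stack = v :: rest)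
      (hperm : pushes.Perm ((Finset.univ.filter
        (fun u => adj v u = true ∧ s.count u + 1 = inDeg adj u)).toList)) :
      DFSStep adj s
        { stack := pushes ++ rest
          count := fun u => if adj v u then s.count u + 1 else s.count u
          popped := s.popped ++ [v]
          pushCount := s.pushCount + pushes.length }

/-- Reachability between DFS states by zero or more steps. -/
def Reaches {V : Type*} [Fintype V] [DecidableEq V] (adj : V → V → Bool)
    (s s' : DFSState V) : Prop :=
  Relation.ReflTransGen (DFSStep adj) s s'

/-- Graph reachability along directed edges. -/
def Reach {V : Type*} (adj : V → V → Bool) : V → V → Prop :=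
  Relation.ReflTransGen (fun a b => adj a b = true)

/-- The directed graph `adj` is acyclic. -/
def Acyclic {V : Type*} (adj : V → V → Bool) : Prop :=
  ∀ v, ¬ Relation.TransGen (fun a b => adj a b = true) v v

def DFSInv {V : Type*} [Fintype V] [DecidableEq V] (adj : V → V → Bool) (l0 : V)
    (s : DFSState V) : Prop :=
  (∀ u, u ∈ s.stack ∨ u ∈ s.popped → Reach adj l0 u) ∧
  (∀ u, s.count u = ∑ w ∈ Finset.univ.filter (fun w => adj w u = true), s.popped.count w) ∧
  (∀ u, s.stack.count u + s.popped.count u ≤ 1) ∧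
  (∀ u, u ≠ l0 → (u ∈ s.stack ∨ u ∈ s.popped) → s.count u = inDeg adj u)

theorem DFSInv_init {V : Type*} [Fintype V] [DecidableEq V] (adj : V → V → Bool) (l0 : V) :
    DFSInv adj l0 (initState l0) := by
  refine ⟨?_, ?_, ?_, ?_⟩
  · intro u hu
    simp [initState] at hu
    subst hu
    exact Relation.ReflTransGen.refl
  · intro u; simp [initState]
  · intro u; simp [initState, List.count_singleton']
    split <;> simp
  · intro u hne hu
    simp [initState] at hu
    exact absurd hu hne

theorem DFSInv_step {V : Type*} [Fintype V] [DecidableEq V] (adj : V → V → Bool)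
    (hacyc : Acyclic adj) (l0 : V) (s s' : DFSState V)
    (hinv : DFSInv adj l0 s) (hstep : DFSStep adj s s') : DFSInv adj l0 s' := by
  obtain ⟨hA, hB, hC, hD⟩ := hinv
  cases hstep with
  | pop v rest pushes hstack hperm =>
    -- basic facts
    have hvstack : v ∈ s.stack := by rw [hstack]; exact List.mem_cons_self
    have hreachv : Reach adj l0 v := hA v (Or.inl hvstack)
    have hmem : ∀ u, u ∈ pushes ↔ (adj v u = true ∧ s.count u + 1 = inDeg adj u) := by
      intro u
      rw [hperm.mem_iff, Finset.mem_toList, Finset.mem_filter]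
      simp
    have hnd : pushes.Nodup := hperm.nodup_iff.mpr (Finset.nodup_toList _)
    have hcountv : s.stack.count v = 1 + rest.count v := by
      rw [hstack, List.count_cons]; simp [add_comm]
    have hpoppedv : s.popped.count v = 0 := by
      have := hC v
      have h1 : 1 ≤ s.stack.count v := List.one_le_count_iff.mpr hvstack
      omega
    have hrestv : rest.count v = 0 := by
      have := hC v; omega
    -- counts in the new stack/popped
    have hstackcount : ∀ u, s.stack.count u = rest.count u + (if v = u then 1 else 0) := by
      intro u; rw [hstack, List.count_cons]; simp [beq_iff_eq]
    -- freshness of pushed vertices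
    have hfresh : ∀ u ∈ pushes, s.stack.count u = 0 ∧ s.popped.count u = 0 := by
      intro u hu
      obtain ⟨hadj, hcnt⟩ := (hmem u).mp hu
      by_contra hcon
      have hever : u ∈ s.stack ∨ u ∈ s.popped := by
        rcases Nat.eq_zero_or_pos (s.stack.count u) with h | h
        · rcases Nat.eq_zero_or_pos (s.popped.count u) with h2 | h2
          · exact absurd ⟨h, h2⟩ hcon
          · exact Or.inr (List.one_le_count_iff.mp h2)
        · exact Or.inl (List.one_le_count_iff.mp h)
      by_cases hul : u = l0
      · subst hul
        exact absurd (Relation.TransGen.tail' hreachv hadj) (hacyc u)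
      · have := hD u hul hever
        omega
    -- no in-neighbor of an already-pushed vertex can be v
    have hkey : ∀ u, (u ∈ s.stack ∨ u ∈ s.popped) → u ≠ l0 → adj v u = true → False := by
      intro u hever hul hadj
      have hcnt := hD u hul hever
      have hvN : v ∈ Finset.univ.filter (fun w => adj w u = true) := by
        simp [hadj]
      have hsum : s.count u =
          ∑ w ∈ (Finset.univ.filter (fun w => adj w u = true)).erase v, s.popped.count w
            + s.popped.count v := by
        rw [hB u, Finset.sum_erase_add _ _ hvN]
      have hle : ∑ w ∈ (Finset.univ.filter (fun w => adj w u = true)).erase v,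
          s.popped.count w ≤ ((Finset.univ.filter (fun w => adj w u = true)).erase v).card := by
        calc _ ≤ ∑ _w ∈ (Finset.univ.filter (fun w => adj w u = true)).erase v, 1 :=
              Finset.sum_le_sum (fun w _ => by have := hC w; omega)
        _ = _ := by simp
      have hcard : ((Finset.univ.filter (fun w => adj w u = true)).erase v).card
          = inDeg adj u - 1 := by
        rw [Finset.card_erase_of_mem hvN]; rfl
      have hpos : 1 ≤ inDeg adj u := by
        have := Finset.card_pos.mpr ⟨v, hvN⟩
        exact this
      omega
    refine ⟨?_, ?_, ?_, ?_⟩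
    · -- A
      intro u hu
      simp only [List.mem_append, List.mem_singleton] at hu
      rcases hu with (hu | hu) | hu | hu
      · exact Relation.ReflTransGen.tail hreachv ((hmem u).mp hu).1
      · exact hA u (Or.inl (by rw [hstack]; exact List.mem_cons_of_mem _ hu))
      · exact hA u (Or.inr hu)
      · subst hu; exact hreachv
    · -- B
      intro u
      simp only
      rw [hB u]
      have : ∀ w, (s.popped ++ [v]).count w = s.popped.count w + (if w = v then 1 else 0) := by
        intro w; rw [List.count_append, List.count_singleton']
        simp [eq_comm]
      simp only [this, Finset.sum_add_distrib, Finset.sum_ite_eq', Finset.mem_filter,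
        Finset.mem_univ, true_and]
      split <;> simp_all
    · -- C
      intro u
      simp only [List.count_append, List.count_singleton', beq_iff_eq]
      by_cases hu : u ∈ pushes
      · have h1 : pushes.count u = 1 := List.count_eq_one_of_mem hnd hu
        obtain ⟨hs0, hp0⟩ := hfresh u hu
        rcases eq_or_ne v u with hvu | hvu
        · exfalso; subst hvu; omega
        · have hsc : s.stack.count u = rest.count u := by
            rw [hstackcount u, if_neg hvu]; omega
          simp only [h1, hp0, if_neg hvu]
          omega
      · have h0 : pushes.count u = 0 := List.count_eq_zero.mpr hu
        rcases eq_or_ne v u with hvu | hvu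
        · subst hvu
          have hsc : s.stack.count v = rest.count v + 1 := by
            rw [hstackcount v, if_pos rfl]
          have := hC v
          simp only [h0]
          simp only [if_true]
          omega
        · have hsc : s.stack.count u = rest.count u := by
            rw [hstackcount u, if_neg hvu]; omega
          have := hC u
          simp only [h0, if_neg hvu]
          omega
    · -- D
      intro u hul hu
      simp only [List.mem_append, List.mem_singleton] at hu
      by_cases hp : u ∈ pushes
      · obtain ⟨hadj, hcnt⟩ := (hmem u).mp hp
        simp only [hadj, if_true]
        exact hcnt
      · rcases hu with (hu | hu) | hu | hu
        · exact absurd hu hp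
        · -- u in rest
          have hever : u ∈ s.stack ∨ u ∈ s.popped :=
            Or.inl (by rw [hstack]; exact List.mem_cons_of_mem _ hu)
          have : adj v u = false := by
            by_contra h
            exact hkey u hever hul (by simpa using h)
          simp only [this, Bool.false_eq_true, if_false]
          exact hD u hul hever
        · have hever : u ∈ s.stack ∨ u ∈ s.popped := Or.inr hu
          have : adj v u = false := by
            by_contra h
            exact hkey u hever hul (by simpa using h)
          simp only [this, Bool.false_eq_true, if_false]
          exact hD u hul hever
        · subst hu
          have hself : adj u u = false := by
            by_contra h
            have h' : adj u u = true := by simpa using h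
            exact absurd (show Relation.TransGen (fun a b => adj a b = true) u u from
              Relation.TransGen.single h') (hacyc u)
          simp only [hself, Bool.false_eq_true, if_false]
          exact hD u hul (Or.inl hvstack)


/-- In the modified DFS on a finite DAG, every vertex is pushed
onto the stack at most once: in any reachable state, the number of occurrences
of `u` on the stack plus in the popped list is at most one. -/
theorem pushed_at_most_once {V : Type*} [Fintype V] [DecidableEq V]
    (adj : V → V → Bool) (hacyc : Acyclic adj) (l0 : V)
    (s : DFSState V) (hs : Reaches adj (initState l0) s) (u : V) :
    s.stack.count u + s.popped.count u ≤ 1 := by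
  have hinv : DFSInv adj l0 s := by
    induction hs with
    | refl => exact DFSInv_init adj l0
    | tail _ hstep ih => exact DFSInv_step adj hacyc l0 _ _ ih hstep
  exact hinv.2.2.1 u
end

section
/- In the modified DFS, if v is popped at some step and v ≠ l0, then every in-neighbor of v was popped at a strictly earlier step; consequently, the sequence of popped vertices forms a topological order of the subgraph induced on the popped vertices. -/
section Aux

variable {V : Type*} [Fintype V] [DecidableEq V] (adj : V → V → Bool)

omit [Fintype V] in
lemma filter_length_eq_card (u : V) (l : List V) (hl : l.Nodup) :
    (l.filter (fun w => adj w u)).length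
      = (l.toFinset.filter (fun w => adj w u = true)).card := by
  have h1 : (l.filter (fun w => adj w u)).toFinset
      = l.toFinset.filter (fun w => adj w u = true) := by
    ext x; simp [List.mem_filter]
  rw [← h1, List.card_toFinset, List.Nodup.dedup (hl.filter _)]

lemma count_le_inDeg (u : V) (l : List V) (hl : l.Nodup) :
    (l.filter (fun w => adj w u)).length ≤ inDeg adj u := by
  rw [filter_length_eq_card adj u l hl, inDeg]
  exact Finset.card_le_card (fun w hw => by
    simp only [Finset.mem_filter] at hw ⊢
    exact ⟨Finset.mem_univ w, hw.2⟩)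

lemma count_eq_iff (u : V) (l : List V) (hl : l.Nodup) :
    (l.filter (fun w => adj w u)).length = inDeg adj u ↔
      ∀ w, adj w u = true → w ∈ l := by
  rw [filter_length_eq_card adj u l hl, inDeg]
  constructor
  · intro h w hw
    have hsub : l.toFinset.filter (fun w => adj w u = true)
        ⊆ Finset.univ.filter (fun w => adj w u = true) := fun x hx => by
      simp only [Finset.mem_filter] at hx ⊢
      exact ⟨Finset.mem_univ x, hx.2⟩
    have heq := Finset.eq_of_subset_of_card_le hsub (le_of_eq h.symm)
    have : w ∈ l.toFinset.filter (fun w => adj w u = true) := by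
      rw [heq]; simp [hw]
    simpa using (Finset.mem_filter.mp this).1
  · intro h
    congr 1
    ext w
    simp only [Finset.mem_filter, List.mem_toFinset, Finset.mem_univ, true_and]
    exact ⟨fun hx => hx.2, fun hx => ⟨h w hx, hx⟩⟩

/-- The invariant maintained by the modified DFS. -/
structure DFSInv_s2 (l0 : V) (s : DFSState V) : Prop where
  countEq : ∀ u, s.count u = (s.popped.filter (fun w => adj w u)).length
  nodupP : s.popped.Nodup
  nodupS : s.stack.Nodup
  disj : ∀ v ∈ s.stack, v ∉ s.popped
  stackFull : ∀ v ∈ s.stack, v ≠ l0 → s.count v = inDeg adj v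
  reachP : ∀ v ∈ s.popped, Reach adj l0 v
  reachS : ∀ v ∈ s.stack, Reach adj l0 v
  topo : ∀ v ∈ s.popped, v ≠ l0 → ∀ u, adj u v = true →
      u ∈ s.popped ∧ s.popped.idxOf u < s.popped.idxOf v

lemma dfsInv_init (l0 : V) : DFSInv_s2 adj l0 (initState l0) := by
  constructor
  all_goals simp [initState, Reach]
  all_goals exact Relation.ReflTransGen.refl

lemma dfsInv_step (hacyc : Acyclic adj) (l0 : V) {s t : DFSState V}
    (hst : DFSStep adj s t) (hI : DFSInv_s2 adj l0 s) : DFSInv_s2 adj l0 t := by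
  obtain ⟨v, rest, pushes, hstack, hperm⟩ := hst
  have hv : v ∈ s.stack := by rw [hstack]; exact List.mem_cons_self
  have hvP : v ∉ s.popped := hI.disj v hv
  have hreachv : Reach adj l0 v := hI.reachS v hv
  have hmem_pushes : ∀ u, u ∈ pushes ↔
      (adj v u = true ∧ s.count u + 1 = inDeg adj u) := by
    intro u
    rw [hperm.mem_iff, Finset.mem_toList, Finset.mem_filter]
    simp
  have hnodup_pushes : pushes.Nodup := hperm.nodup_iff.mpr (Finset.nodup_toList _)
  have hrest_nodup : rest.Nodup := by
    have := hI.nodupS; rw [hstack] at this; exact (List.nodup_cons.mp this).2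
  have hv_rest : v ∉ rest := by
    have := hI.nodupS; rw [hstack] at this; exact (List.nodup_cons.mp this).1
  have hrest_stack : ∀ u ∈ rest, u ∈ s.stack := by
    intro u hu; rw [hstack]; exact List.mem_cons_of_mem v hu
  -- no edge from v to a non-l0 vertex remaining on the stack
  have hrest_nadj : ∀ u ∈ rest, u ≠ l0 → adj v u = true → False := by
    intro u hu hne hadj
    have hfull := hI.stackFull u (hrest_stack u hu) hne
    rw [hI.countEq u] at hfull
    have := (count_eq_iff adj u s.popped hI.nodupP).mp hfull v hadj
    exact hvP this
  -- pushed vertices are fresh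
  have hpush_fresh : ∀ u ∈ pushes, u ∉ s.popped ∧ u ≠ v := by
    intro u hu
    obtain ⟨hadj, hcnt⟩ := (hmem_pushes u).mp hu
    constructor
    · intro hup
      by_cases hul : u = l0
      · exact hacyc l0 (Relation.TransGen.tail' hreachv (by rw [← hul]; exact hadj))
      · have := ((hI.topo u hup hul))
        have hall : ∀ w, adj w u = true → w ∈ s.popped := fun w hw =>
          (this w hw).1
        have hfull := (count_eq_iff adj u s.popped hI.nodupP).mpr hall
        rw [hI.countEq u] at hcnt
        omega
    · intro huv
      subst huv
      exact hacyc u (Relation.TransGen.single hadj)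
  have hpush_rest : ∀ u ∈ pushes, u ∉ rest := by
    intro u hu hur
    obtain ⟨hadj, hcnt⟩ := (hmem_pushes u).mp hu
    by_cases hul : u = l0
    · exact hacyc l0 (Relation.TransGen.tail' hreachv (by rw [← hul]; exact hadj))
    · have hfull := hI.stackFull u (hrest_stack u hur) hul
      omega
  -- v has all in-neighbors popped if v ≠ l0
  have hv_full : v ≠ l0 → ∀ w, adj w v = true → w ∈ s.popped := by
    intro hne w hw
    have hfull := hI.stackFull v hv hne
    rw [hI.countEq v] at hfull
    exact (count_eq_iff adj v s.popped hI.nodupP).mp hfull w hw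
  constructor
  · -- countEq
    intro u
    simp only [List.filter_append]
    by_cases hadj : adj v u
    · simp [hadj, hI.countEq u]
    · simp [hadj, hI.countEq u]
  · -- nodupP
    simp [List.nodup_append, hI.nodupP, hvP]
    exact fun a ha hav => hvP (hav ▸ ha)
  · -- nodupS
    rw [List.nodup_append]
    exact ⟨hnodup_pushes, hrest_nodup, fun u hu b hb hub => hpush_rest u hu (hub ▸ hb)⟩
  · -- disj
    intro u hu hup
    rw [List.mem_append] at hu hup
    rcases hu with hu | hu
    · obtain ⟨h1, h2⟩ := hpush_fresh u hu
      rcases hup with hup | hup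
      · exact h1 hup
      · simp at hup; exact h2 hup
    · rcases hup with hup | hup
      · exact hI.disj u (hrest_stack u hu) hup
      · simp at hup; subst hup; exact hv_rest hu
  · -- stackFull
    intro u hu hne
    rw [List.mem_append] at hu
    rcases hu with hu | hu
    · obtain ⟨hadj, hcnt⟩ := (hmem_pushes u).mp hu
      simp only [hadj, if_true]
      exact hcnt
    · have hfull := hI.stackFull u (hrest_stack u hu) hne
      by_cases hadj : adj v u
      · exact absurd hadj (fun h => hrest_nadj u hu hne h)
      · simp [hadj, hfull]
  · -- reachP
    intro u hu
    rw [List.mem_append] at hu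
    rcases hu with hu | hu
    · exact hI.reachP u hu
    · simp at hu; subst hu; exact hreachv
  · -- reachS
    intro u hu
    rw [List.mem_append] at hu
    rcases hu with hu | hu
    · obtain ⟨hadj, _⟩ := (hmem_pushes u).mp hu
      exact Relation.ReflTransGen.tail hreachv hadj
    · exact hI.reachS u (hrest_stack u hu)
  · -- topo
    intro w hw hne u hadj
    rw [List.mem_append] at hw
    rcases hw with hw | hw
    · obtain ⟨h1, h2⟩ := hI.topo w hw hne u hadj
      refine ⟨List.mem_append.mpr (Or.inl h1), ?_⟩
      rw [List.idxOf_append_of_mem h1, List.idxOf_append_of_mem hw]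
      exact h2
    · simp only [List.mem_singleton] at hw
      subst hw
      have hu : u ∈ s.popped := hv_full hne u hadj
      refine ⟨List.mem_append.mpr (Or.inl hu), ?_⟩
      rw [List.idxOf_append_of_mem hu, List.idxOf_append_of_notMem hvP]
      simp only [List.idxOf_cons_self, Nat.add_zero]
      exact List.idxOf_lt_length_iff.mpr hu

end Aux

/-- if `v` is popped and `v ≠ l0`, then every in-neighbor of `v`
was popped at a strictly earlier step; consequently the popped sequence is a
topological order of the subgraph induced on the popped vertices. -/
theorem popped_topological {V : Type*} [Fintype V] [DecidableEq V]
    (adj : V → V → Bool) (hacyc : Acyclic adj) (l0 : V)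
    (s : DFSState V) (hs : Reaches adj (initState l0) s) :
    (∀ v ∈ s.popped, v ≠ l0 → ∀ u, adj u v = true →
      u ∈ s.popped ∧ s.popped.idxOf u < s.popped.idxOf v) ∧
    (∀ u ∈ s.popped, ∀ v ∈ s.popped, adj u v = true →
      s.popped.idxOf u < s.popped.idxOf v) := by
  have hI : DFSInv_s2 adj l0 s := by
    induction hs with
    | refl => exact dfsInv_init adj l0
    | tail _ h2 ih => exact dfsInv_step adj hacyc l0 h2 ih
  refine ⟨hI.topo, ?_⟩
  intro u hu v hv hadj
  by_cases hvl : v = l0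
  · exact absurd (Relation.TransGen.tail' (hI.reachP u hu) (hvl ▸ hadj)) (hacyc l0)
  · exact (hI.topo v hv hvl u hadj).2
end
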